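/- For 0 ≤ σ ≤ v with v² − σ² ≤ 1, the Lévy distance between the normal laws N(0,σ²) and N(0,v²) satisfies L(Φ_σ, Φ_v)² ≤ (v² − σ²) · log(2/(v² − σ²)). -/
import Mathlib
open Real MeasureTheory Set

noncomputable def stdGaussianDensity (t : ℝ) : ℝ :=
  (Real.sqrt (2 * Real.pi))⁻¹ * Real.exp (-t ^ 2 / 2)

noncomputable def stdNormalCDF (x : ℝ) : ℝ :=
  ∫ t in Set.Iic x, stdGaussianDensity t

lemma gauss_eq : stdGaussianDensity = fun t => (Real.sqrt (2 * Real.pi))⁻¹ * Real.exp (-(1/2) * t ^ 2) := by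
  funext t; unfold stdGaussianDensity; rw [show -t^2/2 = -(1/2)*t^2 by ring]

lemma gauss_integrable : Integrable stdGaussianDensity := by
  rw [gauss_eq]
  exact (integrable_exp_neg_mul_sq (by norm_num)).const_mul _

lemma gauss_nonneg (t : ℝ) : 0 ≤ stdGaussianDensity t := by
  unfold stdGaussianDensity
  positivity

lemma gauss_total : ∫ t, stdGaussianDensity t = 1 := by
  rw [gauss_eq, MeasureTheory.integral_const_mul, integral_gaussian]
  rw [show π / (1/2) = 2 * π by ring]
  rw [inv_mul_cancel₀ (by positivity : Real.sqrt (2*π) ≠ 0)]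

lemma cdf_mono : Monotone stdNormalCDF := by
  intro a b hab
  exact setIntegral_mono_set gauss_integrable.integrableOn
    (Filter.Eventually.of_forall gauss_nonneg) (HasSubset.Subset.eventuallyLE (Iic_subset_Iic.mpr hab))

lemma cdf_nonneg (x : ℝ) : 0 ≤ stdNormalCDF x :=
  setIntegral_nonneg measurableSet_Iic fun t _ => gauss_nonneg t

lemma cdf_add_tail (x : ℝ) : stdNormalCDF x + ∫ t in Ioi x, stdGaussianDensity t = 1 := by
  rw [stdNormalCDF, ← gauss_total]
  rw [← integral_add_compl measurableSet_Iic gauss_integrable]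
  congr 1
  simp [compl_Iic, integral_Ici_eq_integral_Ioi]

lemma tail_nonneg (x : ℝ) : 0 ≤ ∫ t in Ioi x, stdGaussianDensity t :=
  setIntegral_nonneg measurableSet_Ioi fun t _ => gauss_nonneg t

lemma cdf_le_one (x : ℝ) : stdNormalCDF x ≤ 1 := by
  have := cdf_add_tail x
  have := tail_nonneg x
  linarith

lemma cdf_neg (x : ℝ) : stdNormalCDF (-x) = 1 - stdNormalCDF x := by
  have h : stdNormalCDF (-x) = ∫ t in Ioi x, stdGaussianDensity t := by
    rw [stdNormalCDF, ← integral_comp_neg_Ioi]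
    congr 1; funext t
    simp [stdGaussianDensity]
  have := cdf_add_tail x
  linarith

lemma cdf_half : stdNormalCDF 0 = 1/2 := by
  have := cdf_neg 0
  rw [neg_zero] at this
  linarith

lemma tail_half : ∫ t in Ioi (0:ℝ), stdGaussianDensity t = 1/2 := by
  have := cdf_add_tail 0
  rw [cdf_half] at this
  linarith

lemma tail_shift (y : ℝ) :
    ∫ t in Ioi y, stdGaussianDensity t = ∫ t in Ioi (0:ℝ), stdGaussianDensity (t + y) := by
  rw [← integral_indicator measurableSet_Ioi, ← integral_indicator measurableSet_Ioi]
  rw [← MeasureTheory.integral_add_right_eq_self ((Ioi y).indicator stdGaussianDensity) y]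
  congr 1; funext x
  by_cases hx : x ∈ Ioi (0:ℝ)
  · rw [indicator_of_mem hx, indicator_of_mem (by simpa using hx.out)]
  · rw [indicator_of_notMem hx, indicator_of_notMem (by simp at hx ⊢; linarith)]

lemma tail_bound {y : ℝ} (hy : 0 ≤ y) :
    1 - stdNormalCDF y ≤ Real.exp (-y^2/2) / 2 := by
  have key : ∫ t in Ioi y, stdGaussianDensity t ≤ Real.exp (-y^2/2) / 2 := by
    rw [tail_shift]
    have hle : ∀ x ∈ Ioi (0:ℝ), stdGaussianDensity (x + y) ≤
        Real.exp (-y^2/2) * stdGaussianDensity x := by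
      intro x hx
      unfold stdGaussianDensity
      rw [mul_comm (Real.exp (-y^2/2)) _, mul_assoc, ← Real.exp_add]
      gcongr
      have hx0 : (0:ℝ) ≤ x := le_of_lt hx
      nlinarith [mul_nonneg hx0 hy]
    calc ∫ t in Ioi (0:ℝ), stdGaussianDensity (t + y)
        ≤ ∫ t in Ioi (0:ℝ), Real.exp (-y^2/2) * stdGaussianDensity t := by
          apply setIntegral_mono_on
          · exact (gauss_integrable.comp_add_right y).integrableOn
          · exact (gauss_integrable.const_mul _).integrableOn
          · exact measurableSet_Ioi
          · exact hle
      _ = Real.exp (-y^2/2) / 2 := by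
          rw [MeasureTheory.integral_const_mul, tail_half]; ring
  have := cdf_add_tail y
  linarith

lemma log_two_t {t : ℝ} (ht : 0 < t) (ht1 : t ≤ 1) : Real.log 2 ≤ Real.log (2/t) := by
  apply Real.log_le_log (by norm_num)
  rw [le_div_iff₀ ht]; nlinarith

lemma log_pos' {t : ℝ} (ht : 0 < t) (ht1 : t ≤ 1) : 0 < Real.log (2/t) :=
  lt_of_lt_of_le (Real.log_pos (by norm_num)) (log_two_t ht ht1)

lemma aux_tail {t ε y : ℝ} (ht : 0 < t) (ht1 : t ≤ 1)
    (hε : ε = Real.sqrt (t * Real.log (2/t))) (hy : 0 ≤ y)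
    (hy2 : Real.log (2/t) ≤ y^2) : 1 - stdNormalCDF y ≤ ε := by
  have hlog := log_pos' ht ht1
  have h2 : 1 - stdNormalCDF y ≤ Real.exp (-y^2/2) / 2 := tail_bound hy
  have h3 : Real.exp (-y^2/2) ≤ Real.sqrt (t/2) := by
    rw [show Real.sqrt (t/2) = Real.exp (Real.log (Real.sqrt (t/2)))
      from (Real.exp_log (Real.sqrt_pos.mpr (by linarith))).symm]
    apply Real.exp_le_exp.mpr
    rw [Real.log_sqrt (by linarith)]
    have : Real.log (t/2) = - Real.log (2/t) := by
      rw [Real.log_div (by linarith) (by norm_num), Real.log_div (by norm_num) (by linarith)]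
      ring
    rw [this]; linarith
  have h4 : Real.sqrt (t/2) / 2 ≤ ε := by
    rw [hε, show Real.sqrt (t/2) / 2 = Real.sqrt (t/2/4) by
      rw [show t/2/4 = (t/2) * (1/2)^2 by ring, Real.sqrt_mul (by linarith),
        Real.sqrt_sq (by norm_num)]; ring]
    apply Real.sqrt_le_sqrt
    have hl8 : (1:ℝ)/8 ≤ Real.log (2/t) := by
      have := Real.log_two_gt_d9
      linarith [log_two_t ht ht1]
    nlinarith
  linarith

/-- Distribution function of N(0,σ²); for σ = 0 this is the distribution function
of the unit mass at the origin (Heaviside function, right-continuous). -/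
noncomputable def normalCDF (σ : ℝ) (x : ℝ) : ℝ :=
  if σ = 0 then (if x < 0 then 0 else 1) else stdNormalCDF (x / σ)

/-- Lévy distance between two distribution functions. -/
noncomputable def levyDist (F G : ℝ → ℝ) : ℝ :=
  sInf {h : ℝ | 0 ≤ h ∧ ∀ x : ℝ, G (x - h) - h ≤ F x ∧ F x ≤ G (x + h) + h}

lemma ncdf_nonneg (σ x : ℝ) : 0 ≤ normalCDF σ x := by
  unfold normalCDF; split
  · split <;> norm_num
  · exact cdf_nonneg _

lemma ncdf_le_one (σ x : ℝ) : normalCDF σ x ≤ 1 := by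
  unfold normalCDF; split
  · split <;> norm_num
  · exact cdf_le_one _

lemma sq_step {t L ε v σ a : ℝ} (ht : 0 < t) (hL : 0 < L) (hσv : σ < v)
    (hv : 0 < v) (hεp : 0 < ε) (hε2 : ε^2 = t * L) (hvσt : (v - σ)^2 ≤ t)
    (hεx : ε * v ≤ a * (v - σ)) : 0 ≤ a / v ∧ L ≤ (a / v)^2 := by
  have hvσ : 0 < v - σ := by linarith
  have ha0 : 0 < a := by
    by_contra h
    push_neg at h
    nlinarith
  constructor
  · positivity
  · rw [div_pow, le_div_iff₀ (by positivity)]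
    have h5 : (ε * v)^2 ≤ (a * (v - σ))^2 :=
      pow_le_pow_left₀ (by positivity) hεx 2
    nlinarith [sq_nonneg a]

lemma key (σ v : ℝ) (h0 : 0 ≤ σ) (hσv : σ < v) (h1 : v^2 - σ^2 ≤ 1) (x : ℝ)
    {ε : ℝ} (hε : ε = Real.sqrt ((v^2 - σ^2) * Real.log (2/(v^2 - σ^2)))) :
    normalCDF v (x - ε) - ε ≤ normalCDF σ x ∧ normalCDF σ x ≤ normalCDF v (x + ε) + ε := by
  have hv : 0 < v := lt_of_le_of_lt h0 hσv
  set t := v^2 - σ^2 with htdef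
  have ht : 0 < t := by nlinarith
  have ht1 : t ≤ 1 := h1
  set L := Real.log (2/t) with hLdef
  have hL : 0 < L := log_pos' ht ht1
  have hεp : 0 < ε := hε ▸ Real.sqrt_pos.mpr (by positivity)
  have hε2 : ε^2 = t * L := by rw [hε, Real.sq_sqrt (by positivity)]
  have hvσt : (v - σ)^2 ≤ t := by nlinarith
  constructor
  · -- G (x - ε) - ε ≤ F x
    by_cases hσ0 : σ = 0
    · subst hσ0
      unfold normalCDF
      rw [if_pos rfl, if_neg (ne_of_gt hv)]
      split
      · rename_i hx
        have hz : (x - ε)/v = -((ε - x)/v) := by ring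
        obtain ⟨hz0, hz2⟩ := sq_step (a := ε - x) ht hL hσv hv hεp hε2 hvσt (by nlinarith)
        have := aux_tail ht ht1 hε hz0 hz2
        rw [hz, cdf_neg]
        linarith
      · have := cdf_le_one ((x - ε)/v); linarith
    · have hσ : 0 < σ := lt_of_le_of_ne h0 (Ne.symm hσ0)
      unfold normalCDF
      rw [if_neg hσ0, if_neg (ne_of_gt hv)]
      by_cases hc : (x - ε) * σ ≤ x * v
      · have : (x - ε)/v ≤ x/σ := by
          rw [div_le_div_iff₀ hv hσ]; linarith
        linarith [cdf_mono this]
      · push_neg at hc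
        have hz : (x - ε)/v = -((ε - x)/v) := by ring
        obtain ⟨hz0, hz2⟩ := sq_step (a := ε - x) ht hL hσv hv hεp hε2 hvσt (by nlinarith)
        have := aux_tail ht ht1 hε hz0 hz2
        rw [hz, cdf_neg]
        have := cdf_nonneg (x/σ)
        linarith
  · -- F x ≤ G (x + ε) + ε
    by_cases hσ0 : σ = 0
    · subst hσ0
      unfold normalCDF
      rw [if_pos rfl, if_neg (ne_of_gt hv)]
      split
      · have := cdf_nonneg ((x + ε)/v); linarith
      · rename_i hx
        push_neg at hx
        obtain ⟨hy0, hy2⟩ := sq_step (a := x + ε) ht hL hσv hv hεp hε2 hvσt (by nlinarith)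
        have := aux_tail ht ht1 hε hy0 hy2
        linarith
    · have hσ : 0 < σ := lt_of_le_of_ne h0 (Ne.symm hσ0)
      unfold normalCDF
      rw [if_neg hσ0, if_neg (ne_of_gt hv)]
      by_cases hc : x * v ≤ (x + ε) * σ
      · have : x/σ ≤ (x + ε)/v := by
          rw [div_le_div_iff₀ hσ hv]; linarith
        linarith [cdf_mono this]
      · push_neg at hc
        obtain ⟨hy0, hy2⟩ := sq_step (a := x + ε) ht hL hσv hv hεp hε2 hvσt (by nlinarith)
        have := aux_tail ht ht1 hε hy0 hy2
        have := cdf_le_one (x/σ)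
        linarith

lemma levy_le {F G : ℝ → ℝ} {ε : ℝ} (hε : 0 ≤ ε)
    (h : ∀ x : ℝ, G (x - ε) - ε ≤ F x ∧ F x ≤ G (x + ε) + ε) :
    levyDist F G ≤ ε :=
  csInf_le ⟨0, fun _ hh => hh.1⟩ ⟨hε, h⟩

lemma levy_nonneg {F G : ℝ → ℝ} {ε : ℝ} (hε : 0 ≤ ε)
    (h : ∀ x : ℝ, G (x - ε) - ε ≤ F x ∧ F x ≤ G (x + ε) + ε) :
    0 ≤ levyDist F G :=
  le_csInf ⟨ε, hε, h⟩ fun _ hh => hh.1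

theorem stmt_6 (σ v : ℝ) (h0 : 0 ≤ σ) (hσv : σ ≤ v) (h1 : v ^ 2 - σ ^ 2 ≤ 1) :
    levyDist (normalCDF σ) (normalCDF v) ^ 2
      ≤ (v ^ 2 - σ ^ 2) * Real.log (2 / (v ^ 2 - σ ^ 2)) := by
  rcases eq_or_lt_of_le hσv with heq | hlt
  · subst heq
    have h : ∀ x : ℝ, normalCDF σ (x - 0) - 0 ≤ normalCDF σ x ∧
        normalCDF σ x ≤ normalCDF σ (x + 0) + 0 := by
      intro x; simp
    have h1' := levy_le le_rfl h
    have h2' := levy_nonneg le_rfl h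
    have : levyDist (normalCDF σ) (normalCDF σ) = 0 := le_antisymm h1' h2'
    rw [this]
    simp
  · set ε := Real.sqrt ((v^2 - σ^2) * Real.log (2/(v^2 - σ^2))) with hε
    have hkey := fun x => key σ v h0 hlt h1 x hε
    have hε0 : 0 ≤ ε := Real.sqrt_nonneg _
    have hle := levy_le hε0 hkey
    have hnn := levy_nonneg hε0 hkey
    calc levyDist (normalCDF σ) (normalCDF v) ^ 2 ≤ ε ^ 2 := by
          exact pow_le_pow_left₀ hnn hle 2
      _ = (v ^ 2 - σ ^ 2) * Real.log (2 / (v ^ 2 - σ ^ 2)) := by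
          rw [hε, Real.sq_sqrt]
          have hv : 0 < v := lt_of_le_of_lt h0 hlt
          have ht : 0 < v^2 - σ^2 := by nlinarith
          have := log_pos' ht h1
          positivity
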